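/- Let n ≥ 2 and d = ⌈n/3⌉. Then for all 0 ≤ k ≤ d, ∑_{j=0}^{k} (-1)^{k-j} · binom(d-j, k-j) · binom(n-j+1, j) ≥ 0. -/

import Mathlib

open PowerSeries Finset

noncomputable section Stmt7Aux

/-- The inverse of `1 - X` in `ℤ⟦X⟧`. -/
def myInvOne : PowerSeries ℤ := PowerSeries.mk fun _ => 1

lemma one_sub_X_mul_myInvOne : (1 - PowerSeries.X) * myInvOne = 1 := by
  ext n
  rw [sub_mul, one_mul, map_sub]
  cases n with
  | zero => simp [myInvOne, coeff_zero_mul_X]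
  | succ m => simp [myInvOne, coeff_succ_mul_X, coeff_one]

/-- `1 - X` as a unit of `ℤ⟦X⟧`. -/
def myU : (PowerSeries ℤ)ˣ :=
  { val := 1 - PowerSeries.X
    inv := myInvOne
    val_inv := one_sub_X_mul_myInvOne
    inv_val := by rw [mul_comm]; exact one_sub_X_mul_myInvOne }

lemma myU_val : (myU : PowerSeries ℤ) = 1 - PowerSeries.X := rfl

lemma myU_inv_val : ((myU⁻¹ : (PowerSeries ℤ)ˣ) : PowerSeries ℤ) = myInvOne := rfl

lemma coeff_one_sub_X_pow (m i : ℕ) :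
    PowerSeries.coeff i ((1 - PowerSeries.X) ^ m) = (-1) ^ i * (m.choose i : ℤ) := by
  induction m generalizing i with
  | zero =>
    simp only [pow_zero, coeff_one]
    cases i with
    | zero => simp
    | succ i => simp [Nat.choose_eq_zero_of_lt]
  | succ m ih =>
    have : ((1 - PowerSeries.X : PowerSeries ℤ)) ^ (m + 1)
        = (1 - PowerSeries.X) ^ m - ((1 - PowerSeries.X) ^ m : PowerSeries ℤ) * PowerSeries.X := by
      ring
    rw [this, map_sub, ih]
    cases i with
    | zero => simp [coeff_zero_mul_X]
    | succ i =>
      rw [coeff_succ_mul_X, ih, Nat.choose_succ_succ]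
      push_cast
      ring

/-- `d n` in the theorem. -/
def dd (n : ℕ) : ℕ := (n + 2) / 3

/-- The power series whose coefficients are the sums in question. -/
def BB (n : ℕ) : PowerSeries ℤ :=
  ∑ j ∈ Finset.range (n + 1),
    PowerSeries.C ((n + 1 - j).choose j : ℤ) * (PowerSeries.X ^ j *
      ((myU ^ ((dd n : ℤ) - (j : ℤ)) : (PowerSeries ℤ)ˣ) : PowerSeries ℤ))

lemma BB_zero : BB 0 = 1 := by
  simp [BB, dd]

lemma BB_one : BB 1 = 1 := by
  have h0 : ((myU ^ ((dd 1 : ℤ) - ((0 : ℕ) : ℤ)) : (PowerSeries ℤ)ˣ) : PowerSeries ℤ)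
      = 1 - PowerSeries.X := by
    norm_num [dd]
    rfl
  have h1 : ((myU ^ ((dd 1 : ℤ) - ((1 : ℕ) : ℤ)) : (PowerSeries ℤ)ˣ) : PowerSeries ℤ) = 1 := by
    norm_num [dd]
  rw [BB, Finset.sum_range_succ, Finset.sum_range_one, h0, h1]
  norm_num

lemma myU_zpow_mul (a b : ℤ) :
    ((myU ^ a : (PowerSeries ℤ)ˣ) : PowerSeries ℤ) * ((myU ^ b : (PowerSeries ℤ)ˣ) : PowerSeries ℤ)
      = ((myU ^ (a + b) : (PowerSeries ℤ)ˣ) : PowerSeries ℤ) := by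
  rw [← Units.val_mul, ← zpow_add]

lemma helper1 (c : ℤ) (j : ℕ) (a b : ℤ) :
    ((myU ^ a : (PowerSeries ℤ)ˣ) : PowerSeries ℤ) * (PowerSeries.C c * (PowerSeries.X ^ j *
        ((myU ^ b : (PowerSeries ℤ)ˣ) : PowerSeries ℤ)))
      = PowerSeries.C c * (PowerSeries.X ^ j *
        ((myU ^ (a + b) : (PowerSeries ℤ)ˣ) : PowerSeries ℤ)) := by
  rw [← myU_zpow_mul]; ring

lemma helper2 (c : ℤ) (j : ℕ) (a b : ℤ) :
    PowerSeries.X * ((myU ^ a : (PowerSeries ℤ)ˣ) : PowerSeries ℤ) * (PowerSeries.C c *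
        (PowerSeries.X ^ j * ((myU ^ b : (PowerSeries ℤ)ˣ) : PowerSeries ℤ)))
      = PowerSeries.C c * (PowerSeries.X ^ (j + 1) *
        ((myU ^ (a + b) : (PowerSeries ℤ)ˣ) : PowerSeries ℤ)) := by
  rw [← myU_zpow_mul, pow_succ]; ring

lemma BB_rec (n : ℕ) :
    BB (n + 2) = ((myU ^ ((dd (n + 2) : ℤ) - (dd (n + 1) : ℤ)) : (PowerSeries ℤ)ˣ) :
        PowerSeries ℤ) * BB (n + 1)
      + PowerSeries.X * ((myU ^ ((dd (n + 2) : ℤ) - 1 - (dd n : ℤ)) : (PowerSeries ℤ)ˣ) :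
        PowerSeries ℤ) * BB n := by
  set D : ℤ := (dd (n + 2) : ℤ) with hD
  let g : ℕ → PowerSeries ℤ := fun i =>
    PowerSeries.C ((n + 1 - i).choose (i + 1) : ℤ) *
      (PowerSeries.X ^ (i + 1) * ((myU ^ (D - 1 - (i : ℤ)) : (PowerSeries ℤ)ˣ) : PowerSeries ℤ))
  let h : ℕ → PowerSeries ℤ := fun i =>
    PowerSeries.C ((n + 1 - i).choose i : ℤ) *
      (PowerSeries.X ^ (i + 1) * ((myU ^ (D - 1 - (i : ℤ)) : (PowerSeries ℤ)ˣ) : PowerSeries ℤ))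
  have hgz : g (n + 1) = 0 := by
    show PowerSeries.C (((n + 1 - (n + 1)).choose (n + 1 + 1) : ℕ) : ℤ) * _ = 0
    rw [Nat.sub_self, Nat.choose_eq_zero_of_lt (by omega)]
    simp
  have hhz : h (n + 1) = 0 := by
    show PowerSeries.C (((n + 1 - (n + 1)).choose (n + 1) : ℕ) : ℤ) * _ = 0
    rw [Nat.sub_self, Nat.choose_eq_zero_of_lt (by omega)]
    simp
  have E0 : BB (n + 2) = (∑ i ∈ Finset.range (n + 2), g i) + (∑ i ∈ Finset.range (n + 2), h i)
      + ((myU ^ D : (PowerSeries ℤ)ˣ) : PowerSeries ℤ) := by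
    rw [BB, Finset.sum_range_succ']
    congr 1
    · rw [← Finset.sum_add_distrib]
      refine Finset.sum_congr rfl fun i hi => ?_
      have hi' : i < n + 2 := Finset.mem_range.mp hi
      rw [show n + 2 + 1 - (i + 1) = (n + 1 - i) + 1 by omega, Nat.choose_succ_succ,
        show (((i + 1 : ℕ) : ℤ)) = (i : ℤ) + 1 by push_cast; ring,
        show D - ((i : ℤ) + 1) = D - 1 - (i : ℤ) by ring]
      push_cast [map_add]
      show _ = g i + h i
      simp only [g, h]
      ring
    · simp only [Nat.cast_zero, sub_zero, pow_zero, Nat.sub_zero, Nat.choose_zero_right,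
        Nat.cast_one, map_one, one_mul, mul_one]
      rfl
  have E1 : ((myU ^ (D - (dd (n + 1) : ℤ)) : (PowerSeries ℤ)ˣ) : PowerSeries ℤ) * BB (n + 1)
      = (∑ i ∈ Finset.range (n + 2), g i)
        + ((myU ^ D : (PowerSeries ℤ)ˣ) : PowerSeries ℤ) := by
    have step1 : ((myU ^ (D - (dd (n + 1) : ℤ)) : (PowerSeries ℤ)ˣ) : PowerSeries ℤ) * BB (n + 1)
        = ∑ j ∈ Finset.range (n + 2),
            PowerSeries.C ((n + 1 + 1 - j).choose j : ℤ) * (PowerSeries.X ^ j *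
              ((myU ^ (D - (j : ℤ)) : (PowerSeries ℤ)ˣ) : PowerSeries ℤ)) := by
      rw [BB, Finset.mul_sum]
      refine Finset.sum_congr rfl fun j hj => ?_
      rw [helper1,
        show D - (dd (n + 1) : ℤ) + ((dd (n + 1) : ℤ) - (j : ℤ)) = D - (j : ℤ) by ring]
    have step2 : ∑ i ∈ Finset.range (n + 1),
        PowerSeries.C ((n + 1 + 1 - (i + 1)).choose (i + 1) : ℤ) * (PowerSeries.X ^ (i + 1) *
          ((myU ^ (D - ((i + 1 : ℕ) : ℤ)) : (PowerSeries ℤ)ˣ) : PowerSeries ℤ))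
        = ∑ i ∈ Finset.range (n + 1), g i := by
      refine Finset.sum_congr rfl fun i hi => ?_
      have hi' : i < n + 1 := Finset.mem_range.mp hi
      rw [show n + 1 + 1 - (i + 1) = n + 1 - i by omega,
        show (((i + 1 : ℕ) : ℤ)) = (i : ℤ) + 1 by push_cast; ring,
        show D - ((i : ℤ) + 1) = D - 1 - (i : ℤ) by ring]
    have hext : ∑ i ∈ Finset.range (n + 2), g i = ∑ i ∈ Finset.range (n + 1), g i := by
      rw [Finset.sum_range_succ, hgz, add_zero]
    rw [step1, Finset.sum_range_succ', step2, hext]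
    congr 1
    simp
  have E2 : PowerSeries.X * ((myU ^ (D - 1 - (dd n : ℤ)) : (PowerSeries ℤ)ˣ) : PowerSeries ℤ)
        * BB n = ∑ i ∈ Finset.range (n + 2), h i := by
    have hext : ∑ i ∈ Finset.range (n + 2), h i = ∑ i ∈ Finset.range (n + 1), h i := by
      rw [Finset.sum_range_succ, hhz, add_zero]
    rw [hext, BB, Finset.mul_sum]
    refine Finset.sum_congr rfl fun j hj => ?_
    rw [helper2,
      show D - 1 - (dd n : ℤ) + ((dd n : ℤ) - (j : ℤ)) = D - 1 - (j : ℤ) by ring]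
  rw [E0, E1, E2]
  ring

/-- Nonnegativity of all coefficients. -/
def NN (f : PowerSeries ℤ) : Prop := ∀ k, 0 ≤ PowerSeries.coeff k f

lemma NN_one : NN 1 := fun k => by
  rw [coeff_one]; split <;> norm_num

lemma NN_X : NN PowerSeries.X := fun k => by
  rw [coeff_X]; split <;> norm_num

lemma NN_add {f g : PowerSeries ℤ} (hf : NN f) (hg : NN g) : NN (f + g) := fun k => by
  rw [map_add]; exact add_nonneg (hf k) (hg k)

lemma NN_mul {f g : PowerSeries ℤ} (hf : NN f) (hg : NN g) : NN (f * g) := fun k => by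
  rw [PowerSeries.coeff_mul]
  exact Finset.sum_nonneg fun p _ => mul_nonneg (hf _) (hg _)

lemma NN_inv : NN ((myU⁻¹ : (PowerSeries ℤ)ˣ) : PowerSeries ℤ) := fun k => by
  rw [myU_inv_val, myInvOne, coeff_mk]
  norm_num

lemma BB_nonneg (n : ℕ) : NN (BB n) := by
  induction n using Nat.strong_induction_on with
  | _ n ih =>
  match n, ih with
  | 0, _ => rw [BB_zero]; exact NN_one
  | 1, _ => rw [BB_one]; exact NN_one
  | (m + 2), ih =>
    have h1 := BB_rec m
    have h3 : (m + 2) % 3 = 0 ∨ (m + 2) % 3 = 1 ∨ (m + 2) % 3 = 2 := by omega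
    rcases h3 with h3 | h3 | h3
    · -- n ≡ 0 mod 3
      have ea : (dd (m + 2) : ℤ) - (dd (m + 1) : ℤ) = 0 := by
        have : dd (m + 2) = dd (m + 1) := by unfold dd; omega
        rw [this]; ring
      have eb : (dd (m + 2) : ℤ) - 1 - (dd m : ℤ) = -1 := by
        have : dd (m + 2) = dd m := by unfold dd; omega
        rw [this]; ring
      rw [ea, eb, zpow_zero, zpow_neg_one, Units.val_one, one_mul] at h1
      rw [h1]
      exact NN_add (ih _ (by omega)) (NN_mul (NN_mul NN_X NN_inv) (ih _ (by omega)))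
    · -- n ≡ 1 mod 3, so m ≥ 2
      obtain ⟨p, rfl⟩ : ∃ p, m = p + 2 := ⟨m - 2, by omega⟩
      have h2 := BB_rec (p + 1)
      have ea : (dd (p + 2 + 2) : ℤ) - (dd (p + 2 + 1) : ℤ) = 1 := by
        have : dd (p + 2 + 2) = dd (p + 2 + 1) + 1 := by unfold dd; omega
        rw [this]; push_cast; ring
      have eb : (dd (p + 2 + 2) : ℤ) - 1 - (dd (p + 2) : ℤ) = 0 := by
        have : dd (p + 2 + 2) = dd (p + 2) + 1 := by unfold dd; omega
        rw [this]; push_cast; ring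
      have ec : (dd (p + 1 + 2) : ℤ) - (dd (p + 1 + 1) : ℤ) = 0 := by
        have : dd (p + 1 + 2) = dd (p + 1 + 1) := by unfold dd; omega
        rw [this]; ring
      have ed : (dd (p + 1 + 2) : ℤ) - 1 - (dd (p + 1) : ℤ) = -1 := by
        have : dd (p + 1 + 2) = dd (p + 1) := by unfold dd; omega
        rw [this]; ring
      rw [ea, eb, zpow_one, zpow_zero, Units.val_one, mul_one] at h1
      rw [ec, ed, zpow_zero, zpow_neg_one, Units.val_one, one_mul] at h2
      have key : BB (p + 2 + 2) = BB (p + 2) + PowerSeries.X * BB (p + 1) := by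
        have hux : (myU : PowerSeries ℤ) + PowerSeries.X = 1 := by rw [myU_val]; ring
        have hu : (myU : PowerSeries ℤ) * ((myU⁻¹ : (PowerSeries ℤ)ˣ) : PowerSeries ℤ) = 1 := by
          rw [← Units.val_mul, mul_inv_cancel, Units.val_one]
        rw [h1, h2]
        linear_combination (BB (p + 2)) * hux + PowerSeries.X * (BB (p + 1)) * hu
      rw [key]
      exact NN_add (ih _ (by omega)) (NN_mul NN_X (ih _ (by omega)))
    · -- n ≡ 2 mod 3
      have ea : (dd (m + 2) : ℤ) - (dd (m + 1) : ℤ) = 0 := by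
        have : dd (m + 2) = dd (m + 1) := by unfold dd; omega
        rw [this]; ring
      have eb : (dd (m + 2) : ℤ) - 1 - (dd m : ℤ) = 0 := by
        have : dd (m + 2) = dd m + 1 := by unfold dd; omega
        rw [this]; push_cast; ring
      rw [ea, eb, zpow_zero, Units.val_one, one_mul, mul_one] at h1
      rw [h1]
      exact NN_add (ih _ (by omega)) (NN_mul NN_X (ih _ (by omega)))

lemma coeff_BB (n d k : ℕ) (hn : 1 ≤ n) (hd : d = dd n) (hk : k ≤ d) :
    PowerSeries.coeff k (BB n) = ∑ j ∈ Finset.range (k + 1),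
      (-1 : ℤ) ^ (k - j) * ((d - j).choose (k - j) : ℤ) * ((n - j + 1).choose j : ℤ) := by
  have hdn : d ≤ n := by subst hd; unfold dd; omega
  rw [BB, map_sum, ← hd]
  rw [← Finset.sum_subset (Finset.range_subset_range.mpr (by omega : k + 1 ≤ n + 1)) ?_]
  · refine Finset.sum_congr rfl fun j hj => ?_
    have hjk : j ≤ k := by
      have := Finset.mem_range.mp hj; omega
    have hjd : j ≤ d := le_trans hjk hk
    have hz : (myU ^ ((d : ℤ) - (j : ℤ)) : (PowerSeries ℤ)ˣ) = myU ^ (d - j : ℕ) := by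
      rw [show (d : ℤ) - (j : ℤ) = ((d - j : ℕ) : ℤ) by omega, zpow_natCast]
    rw [coeff_C_mul, hz, Units.val_pow_eq_pow_val, myU_val, coeff_X_pow_mul',
      if_pos hjk, coeff_one_sub_X_pow,
      show n + 1 - j = n - j + 1 by omega]
    ring
  · intro j hjn hjk
    have hkj : ¬ j ≤ k := fun h => hjk (Finset.mem_range.mpr (by omega))
    rw [coeff_C_mul, coeff_X_pow_mul', if_neg hkj, mul_zero]

end Stmt7Aux

theorem stmt7 (n d k : ℕ) (hn : 2 ≤ n) (hd : d = (n + 2) / 3) (hk : k ≤ d) :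
    0 ≤ ∑ j ∈ Finset.range (k + 1),
        (-1 : ℤ) ^ (k - j) * ((d - j).choose (k - j) : ℤ) * ((n - j + 1).choose j : ℤ) := by
  rw [← coeff_BB n d k (by omega) hd hk]
  exact BB_nonneg n k
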